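/- Let K₁, …, K_m be normed fields with multiplicative norms, each locally compact and not discrete, let A be a finitely generated abelian group with finite symmetric generating set T, and let λᵢ : A → Kᵢˣ be homomorphisms such that for every pair (i, j) there exists t ∈ T with ‖λᵢ(t)‖ < 1 and ‖λⱼ(t)‖ < 1. Let G = (K₁ × ⋯ × K_m) ⋊ A with a ∈ A acting by multiplying the i-th coordinate by λᵢ(a), and S = T ∪ ⋃ᵢ Bᵢ where Bᵢ = {x ∈ Kᵢ : ‖x‖ ≤ 1}. Fix a finite presentation of A over T with relator set R_A ⊆ F(T), and let R ⊆ F(S) consist of: the elements of R_A; all words t s t⁻¹ s'⁻¹ with t ∈ T, s, s' ∈ Bᵢ and λᵢ(t)·s = s'; all commutators [s, s'] with s ∈ Bᵢ, s' ∈ Bⱼ; and all words s s' s''⁻¹ with s, s', s'' ∈ Bᵢ and s + s' = s''. Then there exists a constant C such that for all n ≥ 1, all i, j, all words t, u over T of length ≤ n, and all v ∈ Bᵢ, w ∈ Bⱼ, the null-homotopic word [t v t⁻¹, u w u⁻¹] has R-area at most C·n². -/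

import Mathlib

open scoped BigOperators

namespace SolCT

variable {m : ℕ} (K : Fin m → Type) [∀ i, NormedField (K i)]
variable {A : Type} [CommGroup A] (lam : ∀ i, A →* (K i)ˣ)

/-- The multiplicative group structure that `AddAut M` carried in the older Mathlib
(`e₁ * e₂ = e₂.trans e₁`, `1 = refl`, `e⁻¹ = e.symm`). -/
instance addAutGroupOld (M : Type*) [Add M] : Group (AddAut M) where
  mul g h := AddEquiv.trans h g
  one := AddEquiv.refl _
  inv := AddEquiv.symm
  mul_assoc _ _ _ := rfl
  one_mul _ := rfl
  mul_one _ := rfl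
  inv_mul_cancel := AddEquiv.self_trans_symm

/-- The action of `A` on `⊕ᵢ Kᵢ`, multiplying the `i`-th coordinate by `λᵢ(a)`. -/
noncomputable def piAut : A →* AddAut (∀ i, K i) where
  toFun a := AddEquiv.piCongrRight fun i =>
    DistribMulAction.toAddAut (K i)ˣ (K i) (lam i a)
  map_one' := by
    refine AddEquiv.ext fun x => funext fun i => ?_
    show (lam i 1 : (K i)ˣ) • x i = x i
    simp
  map_mul' a b := by
    refine AddEquiv.ext fun x => funext fun i => ?_
    show (lam i (a * b) : (K i)ˣ) • x i = (lam i a : (K i)ˣ) • (lam i b : (K i)ˣ) • x i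
    simp [mul_smul]

/-- The action, as a homomorphism to `MulAut` of the multiplicative version. -/
noncomputable def phi : A →* MulAut (Multiplicative (∀ i, K i)) where
  toFun a := AddEquiv.toMultiplicative (piAut K lam a)
  map_one' := by
    refine MulEquiv.ext fun x => ?_
    show piAut K lam 1 (Multiplicative.toAdd x) = Multiplicative.toAdd x
    rw [map_one]; rfl
  map_mul' a b := by
    refine MulEquiv.ext fun x => ?_
    show piAut K lam (a * b) (Multiplicative.toAdd x) =
      piAut K lam a (piAut K lam b (Multiplicative.toAdd x))
    rw [map_mul]; rfl

/-- The group `G = (K₁ × ⋯ × K_m) ⋊ A`. -/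
noncomputable abbrev Grp : Type :=
  SemidirectProduct (Multiplicative (∀ i, K i)) A (phi K lam)

/-- The element of `G` given by `x ∈ Kᵢ` placed in the `i`-th coordinate. -/
noncomputable def bLetter (i : Fin m) (x : K i) : Grp K lam :=
  SemidirectProduct.inl (Multiplicative.ofAdd (Pi.single i x))

/-- The element of `G` given by `t ∈ A`. -/
noncomputable def tLetter (t : A) : Grp K lam :=
  SemidirectProduct.inr t

/-- The generating set `S = T ∪ ⋃ᵢ Bᵢ`. -/
noncomputable def genS (T : Set A) : Set (Grp K lam) :=
  (tLetter K lam '' T) ∪ ⋃ i, bLetter K lam i '' {x : K i | ‖x‖ ≤ 1}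

end SolCT

namespace DehnCT

variable {G : Type*} [Group G] (S : Set G)

/-- The canonical homomorphism `π : F(S) → G` from the free group on `S`. -/
noncomputable def pi : FreeGroup S →* G := FreeGroup.lift Subtype.val

/-- The reduced word length of an element of the free group. -/
noncomputable def len (w : FreeGroup S) : ℕ :=
  letI := Classical.decEq S
  w.norm

end DehnCT

namespace SolCT

variable {m : ℕ} (K : Fin m → Type) [∀ i, NormedField (K i)]
variable {A : Type} [CommGroup A] (lam : ∀ i, A →* (K i)ˣ)

/-- The letter of `F(S)` corresponding to `t ∈ T`. -/
noncomputable def ftl (T : Set A) (t : A) (ht : t ∈ T) : FreeGroup (genS K lam T) :=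
  FreeGroup.of ⟨tLetter K lam t, Or.inl ⟨t, ht, rfl⟩⟩

/-- The letter of `F(S)` corresponding to `x ∈ Bᵢ`. -/
noncomputable def fbl (T : Set A) (i : Fin m) (x : K i) (hx : ‖x‖ ≤ 1) :
    FreeGroup (genS K lam T) :=
  FreeGroup.of ⟨bLetter K lam i x, Or.inr (Set.mem_iUnion.2 ⟨i, ⟨x, hx, rfl⟩⟩)⟩

/-- The inclusion of the generators `T` of `A` into the generators `S` of `G`. -/
noncomputable def iotaTS (T : Set A) : T → genS K lam T :=
  fun t => ⟨tLetter K lam t.1, Or.inl ⟨t.1, t.2, rfl⟩⟩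

/-- The induced map `F(T) → F(S)` on free groups. -/
noncomputable def mapTS (T : Set A) : FreeGroup T →* FreeGroup (genS K lam T) :=
  FreeGroup.map (iotaTS K lam T)

/-- The set `R` of relators: the relators `R_A` of `A`, the conjugation relators
`t s t⁻¹ s'⁻¹`, the commutation relators `[s, s']`, and the addition relators
`s s' s''⁻¹`. -/
noncomputable def Rel (T : Set A) (RA : Set (FreeGroup T)) :
    Set (FreeGroup (genS K lam T)) :=
  (mapTS K lam T) '' RA ∪
  {w | ∃ (t : A) (ht : t ∈ T) (i : Fin m) (x x' : K i)
      (hx : ‖x‖ ≤ 1) (hx' : ‖x'‖ ≤ 1),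
      ((lam i t : (K i)ˣ) : K i) * x = x' ∧
      w = ftl K lam T t ht * fbl K lam T i x hx * (ftl K lam T t ht)⁻¹ *
        (fbl K lam T i x' hx')⁻¹} ∪
  {w | ∃ (i j : Fin m) (x : K i) (y : K j) (hx : ‖x‖ ≤ 1) (hy : ‖y‖ ≤ 1),
      w = fbl K lam T i x hx * fbl K lam T j y hy * (fbl K lam T i x hx)⁻¹ *
        (fbl K lam T j y hy)⁻¹} ∪
  {w | ∃ (i : Fin m) (x x' x'' : K i)
      (hx : ‖x‖ ≤ 1) (hx' : ‖x'‖ ≤ 1) (hx'' : ‖x''‖ ≤ 1),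
      x + x' = x'' ∧
      w = fbl K lam T i x hx * fbl K lam T i x' hx' * (fbl K lam T i x'' hx'')⁻¹}

end SolCT

open SolCT DehnCT


namespace Stmt9Aux

variable {G : Type*} [Group G]

/-- `R`-area predicate: `w` is a product of at most `N` conjugates of `R ∪ R⁻¹`. -/
def Area (R : Set G) (w : G) (N : ℕ) : Prop :=
  ∃ L : List (G × G), L.length ≤ N ∧ (∀ p ∈ L, p.2 ∈ R ∨ p.2⁻¹ ∈ R) ∧
    w = (L.map fun p => p.1 * p.2 * p.1⁻¹).prod

variable {R : Set G}

theorem area_mono {w : G} {N N' : ℕ} (h : Area R w N) (hN : N ≤ N') : Area R w N' := by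
  obtain ⟨L, h1, h2, h3⟩ := h
  exact ⟨L, h1.trans hN, h2, h3⟩

theorem area_one : Area R (1 : G) 0 := ⟨[], by simp, by simp, by simp⟩

theorem area_of_mem {r : G} (h : r ∈ R) : Area R r 1 :=
  ⟨[(1, r)], by simp, by simp [h], by simp⟩

theorem area_of_inv_mem {r : G} (h : r⁻¹ ∈ R) : Area R r 1 :=
  ⟨[(1, r)], by simp, by simp [h], by simp⟩

theorem area_mul {w₁ w₂ : G} {N₁ N₂ : ℕ} (h₁ : Area R w₁ N₁) (h₂ : Area R w₂ N₂) :
    Area R (w₁ * w₂) (N₁ + N₂) := by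
  obtain ⟨L₁, a1, a2, a3⟩ := h₁
  obtain ⟨L₂, b1, b2, b3⟩ := h₂
  refine ⟨L₁ ++ L₂, ?_, ?_, ?_⟩
  · simpa using Nat.add_le_add a1 b1
  · intro p hp; rcases List.mem_append.1 hp with h | h
    · exact a2 p h
    · exact b2 p h
  · rw [a3, b3, List.map_append, List.prod_append]

private theorem conj_prod (g : G) (L : List (G × G)) :
    g * (L.map fun p => p.1 * p.2 * p.1⁻¹).prod * g⁻¹ =
      ((L.map fun p => (g * p.1, p.2)).map fun p => p.1 * p.2 * p.1⁻¹).prod := by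
  induction L with
  | nil => simp
  | cons q L ih =>
    simp only [List.map_cons, List.prod_cons]
    calc g * (q.1 * q.2 * q.1⁻¹ * (L.map fun p => p.1 * p.2 * p.1⁻¹).prod) * g⁻¹
        = (g * q.1 * q.2 * (g * q.1)⁻¹) *
            (g * (L.map fun p => p.1 * p.2 * p.1⁻¹).prod * g⁻¹) := by group
      _ = _ := by rw [ih]

theorem area_conj {w : G} {N : ℕ} (g : G) (h : Area R w N) : Area R (g * w * g⁻¹) N := by
  obtain ⟨L, a1, a2, a3⟩ := h
  refine ⟨L.map fun p => (g * p.1, p.2), by simpa using a1, ?_, ?_⟩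
  · intro p hp
    obtain ⟨q, hq, rfl⟩ := List.mem_map.1 hp
    exact a2 q hq
  · rw [a3]; exact conj_prod g L

theorem area_inv {w : G} {N : ℕ} (h : Area R w N) : Area R w⁻¹ N := by
  obtain ⟨L, a1, a2, a3⟩ := h
  subst a3
  refine area_mono ?_ a1
  clear a1
  induction L with
  | nil => simpa using area_mono (area_one (R := R)) (Nat.zero_le _)
  | cons q L ih =>
    simp only [List.map_cons, List.prod_cons, mul_inv_rev]
    have h1 : Area R (L.map fun p => p.1 * p.2 * p.1⁻¹).prod⁻¹ L.length :=
      ih (fun p hp => a2 p (List.mem_cons_of_mem _ hp))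
    have h2 : Area R (q.1 * q.2 * q.1⁻¹)⁻¹ 1 := by
      have hq : Area R q.2⁻¹ 1 := by
        rcases a2 q (List.mem_cons_self) with h | h
        · exact area_of_inv_mem (by simpa using h)
        · exact area_of_mem h
      have := area_conj q.1 hq
      simpa [mul_assoc] using this
    simpa [List.length_cons, Nat.add_comm] using area_mul h1 h2

/-- `x` and `y` differ by a product of at most `k` conjugates of relators. -/
def AEq (R : Set G) (x y : G) (k : ℕ) : Prop := Area R (x * y⁻¹) k

theorem aeq_refl (x : G) (k : ℕ) : AEq R x x k := by
  simpa [AEq] using area_mono (area_one (R := R)) (Nat.zero_le k)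

theorem aeq_of_area {x : G} {k : ℕ} (h : Area R x k) : AEq R x 1 k := by
  simpa [AEq] using h

theorem aeq_symm {x y : G} {k : ℕ} (h : AEq R x y k) : AEq R y x k := by
  have := area_inv h
  simpa [AEq, mul_inv_rev] using this

theorem aeq_trans {x y z : G} {k l : ℕ} (h1 : AEq R x y k) (h2 : AEq R y z l) :
    AEq R x z (k + l) := by
  have := area_mul h1 h2
  simpa [AEq, mul_assoc] using this

theorem aeq_mul {x x' y y' : G} {k l : ℕ} (h1 : AEq R x x' k) (h2 : AEq R y y' l) :
    AEq R (x * y) (x' * y') (k + l) := by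
  have hy : Area R (x * (y * y'⁻¹) * x⁻¹) l := area_conj x h2
  have := area_mul hy h1
  have e : x * (y * y'⁻¹) * x⁻¹ * (x * x'⁻¹) = x * y * (x' * y')⁻¹ := by group
  rw [e] at this
  exact area_mono this (by omega)

theorem aeq_inv {x y : G} {k : ℕ} (h : AEq R x y k) : AEq R x⁻¹ y⁻¹ k := by
  have := area_conj x⁻¹ (aeq_symm h)
  have e : x⁻¹ * (y * x⁻¹) * x⁻¹⁻¹ = x⁻¹ * y⁻¹⁻¹ := by group
  rwa [AEq, ← e]

theorem aeq_conj {x y : G} {k : ℕ} (g : G) (h : AEq R x y k) :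
    AEq R (g * x * g⁻¹) (g * y * g⁻¹) k := by
  have := area_conj g h
  have e : g * (x * y⁻¹) * g⁻¹ = g * x * g⁻¹ * (g * y * g⁻¹)⁻¹ := by group
  rwa [AEq, ← e]

theorem aeq_conj_congr {x y g g' : G} {k l : ℕ} (h : AEq R x y k) (hg : AEq R g g' l) :
    AEq R (g * x * g⁻¹) (g' * y * g'⁻¹) (k + 2 * l) := by
  have := aeq_mul (aeq_mul hg h) (aeq_inv hg)
  exact area_mono this (by omega)

theorem area_of_aeq {x y : G} {k l : ℕ} (h : AEq R x y k) (hy : Area R y l) :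
    Area R x (k + l) := by
  have := area_mul h hy
  simpa [mul_assoc] using this

theorem aeq_comm_congr {a a' b b' : G} {k l : ℕ} (ha : AEq R a a' k) (hb : AEq R b b' l) :
    AEq R (a * b * a⁻¹ * b⁻¹) (a' * b' * a'⁻¹ * b'⁻¹) (2 * k + 2 * l) := by
  have := aeq_mul (aeq_mul (aeq_mul ha hb) (aeq_inv ha)) (aeq_inv hb)
  exact area_mono this (by omega)

/-! Commutator area lemmas. -/

theorem area_comm_swap {a b : G} {k : ℕ} (h : Area R (a * b * a⁻¹ * b⁻¹) k) :
    Area R (b * a * b⁻¹ * a⁻¹) k := by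
  have := area_inv h
  have e : (a * b * a⁻¹ * b⁻¹)⁻¹ = b * a * b⁻¹ * a⁻¹ := by group
  rwa [e] at this

theorem area_comm_inv_left {a b : G} {k : ℕ} (h : Area R (a * b * a⁻¹ * b⁻¹) k) :
    Area R (a⁻¹ * b * a⁻¹⁻¹ * b⁻¹) k := by
  have := area_conj a⁻¹ (area_comm_swap h)
  have e : a⁻¹ * (b * a * b⁻¹ * a⁻¹) * a⁻¹⁻¹ = a⁻¹ * b * a⁻¹⁻¹ * b⁻¹ := by group
  rwa [e] at this

theorem area_comm_inv_right {a b : G} {k : ℕ} (h : Area R (a * b * a⁻¹ * b⁻¹) k) :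
    Area R (a * b⁻¹ * a⁻¹ * b⁻¹⁻¹) k :=
  area_comm_swap (area_comm_inv_left (area_comm_swap h))

theorem area_comm_mul_left {x y g : G} {k l : ℕ} (hx : Area R (x * g * x⁻¹ * g⁻¹) k)
    (hy : Area R (y * g * y⁻¹ * g⁻¹) l) :
    Area R (x * y * g * (x * y)⁻¹ * g⁻¹) (k + l) := by
  have h1 := area_conj x hy
  have := area_mul h1 hx
  have e : x * (y * g * y⁻¹ * g⁻¹) * x⁻¹ * (x * g * x⁻¹ * g⁻¹) =
      x * y * g * (x * y)⁻¹ * g⁻¹ := by group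
  rw [e] at this
  exact area_mono this (by omega)

/-- The subgroup of elements with finite `R`-area. -/
def areaSubgroup (R : Set G) : Subgroup G where
  carrier := {w | ∃ k, Area R w k}
  one_mem' := ⟨0, area_one⟩
  mul_mem' := fun ⟨k, hk⟩ ⟨l, hl⟩ => ⟨k + l, area_mul hk hl⟩
  inv_mem' := fun ⟨k, hk⟩ => ⟨k, area_inv hk⟩

instance areaSubgroup_normal (R : Set G) : (areaSubgroup R).Normal := by
  constructor
  intro w ⟨k, hk⟩ g
  exact ⟨k, area_conj g hk⟩

theorem exists_area_of_mem_normalClosure {R : Set G} {w : G}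
    (h : w ∈ Subgroup.normalClosure R) : ∃ k, Area R w k := by
  refine Subgroup.normalClosure_le_normal (N := areaSubgroup R) ?_ h
  intro r hr
  exact ⟨1, area_of_mem hr⟩


/-! Free group auxiliary lemmas. -/

theorem mk_single_true {α : Type*} (s : α) :
    FreeGroup.mk [(s, true)] = FreeGroup.of s := rfl

theorem mk_single_false {α : Type*} (s : α) :
    FreeGroup.mk [(s, false)] = (FreeGroup.of s)⁻¹ := by
  rw [← mk_single_true, FreeGroup.inv_mk]
  rfl

theorem mk_cons {α : Type*} (x : α × Bool) (l : List (α × Bool)) :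
    FreeGroup.mk (x :: l) = FreeGroup.mk [x] * FreeGroup.mk l := by
  rw [FreeGroup.mul_mk]
  rfl

theorem mk_replicate {α : Type*} (s : α) (N : ℕ) :
    FreeGroup.mk (List.replicate N (s, true)) = FreeGroup.of s ^ N := by
  induction N with
  | zero => rw [pow_zero, List.replicate_zero, FreeGroup.one_eq_mk]
  | succ N ih =>
    rw [List.replicate_succ, mk_cons, mk_single_true, ih, pow_succ']

/-- Commutators with a power on the left. -/
theorem area_comm_pow {G : Type*} [Group G] {R : Set G} {g h : G} {k : ℕ}
    (hbase : Area R (g * h * g⁻¹ * h⁻¹) k) (N : ℕ) :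
    Area R (g ^ N * h * (g ^ N)⁻¹ * h⁻¹) (N * k) := by
  induction N with
  | zero => simpa using area_mono (area_one (R := R)) (Nat.zero_le _)
  | succ N ih =>
    have := area_comm_mul_left ih hbase
    rw [← pow_succ] at this
    exact area_mono this (by ring_nf; omega)

/-- Commutators of a word with a fixed element, letter by letter. -/
theorem area_comm_mk {α : Type*} {R : Set (FreeGroup α)} {g : FreeGroup α} {c : ℕ}
    (hg : ∀ (s : α) (b : Bool),
      Area R (FreeGroup.mk [(s, b)] * g * (FreeGroup.mk [(s, b)])⁻¹ * g⁻¹) c)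
    (l : List (α × Bool)) :
    Area R (FreeGroup.mk l * g * (FreeGroup.mk l)⁻¹ * g⁻¹) (c * l.length) := by
  induction l with
  | nil =>
    rw [← FreeGroup.one_eq_mk]
    simpa using area_mono (area_one (R := R)) (Nat.zero_le _)
  | cons x l ih =>
    rw [mk_cons]
    have := area_comm_mul_left (hg x.1 x.2) ih
    have e : (x.1, x.2) = x := rfl
    rw [e] at this
    refine area_mono this (by simp [List.length_cons, Nat.mul_add, Nat.mul_one]; omega)

section Spec

open SolCT DehnCT

variable {m : ℕ} (K : Fin m → Type) [∀ i, NormedField (K i)]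
variable {A : Type} [CommGroup A] (lam : ∀ i, A →* (K i)ˣ)
variable (T : Finset A)

/-- Image of a letter under `mapTS`. -/
theorem mapTS_of (s : ((T : Set A) : Set A)) :
    mapTS K lam (T : Set A) (FreeGroup.of s) = ftl K lam (T : Set A) s.1 s.2 := by
  rw [mapTS, FreeGroup.map.of]
  rfl

/-- Transfer of area from `F(T)` (relators `RA`) to `F(S)` (relators `Rel`). -/
theorem area_mapTS (RA : Set (FreeGroup ((T : Set A) : Set A)))
    {w : FreeGroup ((T : Set A) : Set A)} {k : ℕ} (h : Area RA w k) :
    Area (SolCT.Rel K lam (T : Set A) RA) (mapTS K lam (T : Set A) w) k := by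
  obtain ⟨L, a1, a2, a3⟩ := h
  refine ⟨L.map fun p => (mapTS K lam (T : Set A) p.1, mapTS K lam (T : Set A) p.2),
    by simpa using a1, ?_, ?_⟩
  · intro p hp
    obtain ⟨q, hq, rfl⟩ := List.mem_map.1 hp
    rcases a2 q hq with h | h
    · refine Or.inl ?_
      simp only [SolCT.Rel, Set.mem_union]
      exact Or.inl (Or.inl (Or.inl ⟨q.2, h, rfl⟩))
    · refine Or.inr ?_
      simp only [SolCT.Rel, Set.mem_union]
      refine Or.inl (Or.inl (Or.inl ⟨q.2⁻¹, h, ?_⟩))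
      rw [map_inv]
  · rw [a3, map_list_prod]
    congr 1
    simp [List.map_map, Function.comp_def, map_mul, map_inv]

/-- A single conjugation relator step, positive letter. -/
theorem push_pos (RA : Set (FreeGroup ((T : Set A) : Set A)))
    (i : Fin m) (s : ((T : Set A) : Set A)) (x x' : K i)
    (hx : ‖x‖ ≤ 1) (hx' : ‖x'‖ ≤ 1)
    (hmul : ((lam i s.1 : (K i)ˣ) : K i) * x = x') :
    AEq (SolCT.Rel K lam (T : Set A) RA)
      (mapTS K lam (T : Set A) (FreeGroup.of s) * fbl K lam (T : Set A) i x hx *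
        (mapTS K lam (T : Set A) (FreeGroup.of s))⁻¹)
      (fbl K lam (T : Set A) i x' hx') 1 := by
  rw [mapTS_of]
  refine area_of_mem ?_
  simp only [SolCT.Rel, Set.mem_union]
  exact Or.inl (Or.inl (Or.inr ⟨s.1, s.2, i, x, x', hx, hx', hmul, rfl⟩))

/-- A single conjugation relator step, negative letter. -/
theorem push_neg (RA : Set (FreeGroup ((T : Set A) : Set A)))
    (i : Fin m) (s : ((T : Set A) : Set A)) (x x' : K i)
    (hx : ‖x‖ ≤ 1) (hx' : ‖x'‖ ≤ 1)
    (hmul : ((lam i s.1 : (K i)ˣ) : K i) * x' = x) :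
    AEq (SolCT.Rel K lam (T : Set A) RA)
      ((mapTS K lam (T : Set A) (FreeGroup.of s))⁻¹ * fbl K lam (T : Set A) i x hx *
        (mapTS K lam (T : Set A) (FreeGroup.of s))⁻¹⁻¹)
      (fbl K lam (T : Set A) i x' hx') 1 := by
  rw [mapTS_of]
  set f := ftl K lam (T : Set A) s.1 s.2
  set r := f * fbl K lam (T : Set A) i x' hx' * f⁻¹ * (fbl K lam (T : Set A) i x hx)⁻¹ with hr
  have hrel : r ∈ SolCT.Rel K lam (T : Set A) RA := by
    simp only [SolCT.Rel, Set.mem_union]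
    exact Or.inl (Or.inl (Or.inr ⟨s.1, s.2, i, x', x, hx', hx, hmul, rfl⟩))
  refine ⟨[(f⁻¹, r⁻¹)], by simp, ?_, ?_⟩
  · intro p hp
    simp only [List.mem_singleton] at hp
    subst hp
    exact Or.inr (by simpa using hrel)
  · simp only [List.map_cons, List.map_nil, List.prod_cons, List.prod_nil, mul_one, hr]
    group

theorem fbl_congr {i : Fin m} {x y : K i} (h : x = y) (hx : ‖x‖ ≤ 1) (hy : ‖y‖ ≤ 1) :
    fbl K lam (T : Set A) i x hx = fbl K lam (T : Set A) i y hy := by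
  subst h; rfl

/-- Norm bound for the multiplier of a word. -/
theorem norm_lam_mk_le (i : Fin m) (hTsym : ∀ t ∈ T, t⁻¹ ∈ T) (M : ℝ) (hM1 : 1 ≤ M)
    (hM : ∀ s : A, s ∈ T → ‖((lam i s : (K i)ˣ) : K i)‖ ≤ M)
    (l : List (((T : Set A) : Set A) × Bool)) :
    ‖((lam i (FreeGroup.lift Subtype.val (FreeGroup.mk l)) : (K i)ˣ) : K i)‖ ≤
      M ^ l.length := by
  induction l with
  | nil =>
    rw [← FreeGroup.one_eq_mk]
    simp
  | cons x l ih =>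
    rw [mk_cons, map_mul, map_mul, Units.val_mul, norm_mul, List.length_cons, pow_succ,
      mul_comm (M ^ l.length)]
    have hx : ‖((lam i (FreeGroup.lift Subtype.val (FreeGroup.mk [x])) : (K i)ˣ) : K i)‖ ≤ M := by
      rcases x with ⟨s, b⟩
      cases b
      · rw [mk_single_false, map_inv, map_inv, FreeGroup.lift_apply_of, ← map_inv]
        exact hM s.1⁻¹ (hTsym s.1 s.2)
      · rw [mk_single_true, FreeGroup.lift_apply_of]
        exact hM s.1 s.2
    exact mul_le_mul hx ih (norm_nonneg _) (le_trans zero_le_one hM1)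

/-- Pushing a word over `T` through a `B`-letter, provided all intermediate
values stay in the unit ball. -/
theorem push_list (RA : Set (FreeGroup ((T : Set A) : Set A)))
    (i : Fin m) (l : List (((T : Set A) : Set A) × Bool)) (v : K i)
    (hv : ‖v‖ ≤ 1)
    (hv' : ‖((lam i (FreeGroup.lift Subtype.val (FreeGroup.mk l)) : (K i)ˣ) : K i) * v‖ ≤ 1)
    (hsuf : ∀ l', l' <:+ l →
      ‖((lam i (FreeGroup.lift Subtype.val (FreeGroup.mk l')) : (K i)ˣ) : K i) * v‖ ≤ 1) :
    AEq (SolCT.Rel K lam (T : Set A) RA)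
      (mapTS K lam (T : Set A) (FreeGroup.mk l) * fbl K lam (T : Set A) i v hv *
        (mapTS K lam (T : Set A) (FreeGroup.mk l))⁻¹)
      (fbl K lam (T : Set A) i
        (((lam i (FreeGroup.lift Subtype.val (FreeGroup.mk l)) : (K i)ˣ) : K i) * v) hv')
      l.length := by
  induction l with
  | nil =>
    have hval : ((lam i (FreeGroup.lift Subtype.val
        (FreeGroup.mk ([] : List (((T : Set A) : Set A) × Bool)))) : (K i)ˣ) : K i) * v = v := by
      rw [← FreeGroup.one_eq_mk]
      simp
    rw [fbl_congr K lam T hval hv' hv]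
    rw [show FreeGroup.mk ([] : List (((T : Set A) : Set A) × Bool)) = (1 : FreeGroup _) from
      FreeGroup.one_eq_mk.symm, map_one]
    simpa using aeq_refl _ _
  | cons x l ih =>
    have hsl : l <:+ x :: l := (List.suffix_cons x l)
    have hvl := hsuf l hsl
    have ihl := ih hvl (fun l' h => hsuf l' (h.trans hsl))
    have hdecomp : ((lam i (FreeGroup.lift Subtype.val (FreeGroup.mk (x :: l))) : (K i)ˣ) : K i)
        = ((lam i (FreeGroup.lift Subtype.val (FreeGroup.mk [x])) : (K i)ˣ) : K i) *
          ((lam i (FreeGroup.lift Subtype.val (FreeGroup.mk l)) : (K i)ˣ) : K i) := by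
      rw [mk_cons, map_mul, map_mul, Units.val_mul]
    set X := mapTS K lam (T : Set A) (FreeGroup.mk [x]) with hX
    set Y := mapTS K lam (T : Set A) (FreeGroup.mk l) with hY
    have hXY : mapTS K lam (T : Set A) (FreeGroup.mk (x :: l)) = X * Y := by
      rw [mk_cons, map_mul]
    rw [hXY]
    have e1 : X * Y * fbl K lam (T : Set A) i v hv * (X * Y)⁻¹ =
        X * (Y * fbl K lam (T : Set A) i v hv * Y⁻¹) * X⁻¹ := by group
    rw [e1]
    have step1 := aeq_conj (R := SolCT.Rel K lam (T : Set A) RA) X ihl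
    set z := ((lam i (FreeGroup.lift Subtype.val (FreeGroup.mk l)) : (K i)ˣ) : K i) * v with hz
    have step2 : AEq (SolCT.Rel K lam (T : Set A) RA)
        (X * fbl K lam (T : Set A) i z hvl * X⁻¹)
        (fbl K lam (T : Set A) i
          (((lam i (FreeGroup.lift Subtype.val (FreeGroup.mk (x :: l))) : (K i)ˣ) : K i) * v)
          hv') 1 := by
      rcases x with ⟨s, b⟩
      cases b
      · rw [hX, mk_single_false, map_inv]
        refine push_neg K lam T RA i s z _ hvl hv' ?_
        rw [hdecomp, mk_single_false, map_inv, map_inv, FreeGroup.lift_apply_of, hz]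
        rw [← mul_assoc, ← mul_assoc, ← Units.val_mul]
        simp
      · rw [hX, mk_single_true]
        refine push_pos K lam T RA i s z _ hvl hv' ?_
        rw [hdecomp, mk_single_true, FreeGroup.lift_apply_of, hz, mul_assoc]
    have := aeq_trans step1 step2
    refine area_mono this (by simp)

end Spec

end Stmt9Aux

open Stmt9Aux in
/-- Claim 2 in the proof of Theorem `meta` of Cornulier–Tessera:
the commutator `[t v t⁻¹, u w u⁻¹]` has `R`-area at most `C·n²`. -/
theorem stmt9 (m : ℕ) (K : Fin m → Type) [∀ i, NormedField (K i)]
    [∀ i, LocallyCompactSpace (K i)] (hnd : ∀ i, ¬ DiscreteTopology (K i))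
    (A : Type) [CommGroup A]
    (T : Finset A) (hTsym : ∀ t ∈ T, t⁻¹ ∈ T)
    (hTgen : Subgroup.closure (T : Set A) = ⊤)
    (lam : ∀ i, A →* (K i)ˣ)
    (hcontr : ∀ i j : Fin m, ∃ t ∈ T,
      ‖((lam i t : (K i)ˣ) : K i)‖ < 1 ∧ ‖((lam j t : (K j)ˣ) : K j)‖ < 1)
    (RA : Set (FreeGroup (T : Set A))) (hRAfin : RA.Finite)
    (hpres : (FreeGroup.lift Subtype.val : FreeGroup (T : Set A) →* A).ker =
      Subgroup.normalClosure RA) :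
    ∃ C : ℝ, ∀ n : ℕ, 1 ≤ n → ∀ (i j : Fin m) (v : K i) (w : K j)
      (hv : ‖v‖ ≤ 1) (hw : ‖w‖ ≤ 1) (t u : FreeGroup (T : Set A)),
      len (T : Set A) t ≤ n → len (T : Set A) u ≤ n →
      ∃ L : List (FreeGroup (genS K lam (T : Set A)) ×
          FreeGroup (genS K lam (T : Set A))),
        (L.length : ℝ) ≤ C * (n : ℝ) ^ 2 ∧
        (∀ p ∈ L, p.2 ∈ Rel K lam (T : Set A) RA ∨
          p.2⁻¹ ∈ Rel K lam (T : Set A) RA) ∧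
        (mapTS K lam (T : Set A) t * fbl K lam (T : Set A) i v hv *
              (mapTS K lam (T : Set A) t)⁻¹) *
            (mapTS K lam (T : Set A) u * fbl K lam (T : Set A) j w hw *
              (mapTS K lam (T : Set A) u)⁻¹) *
            (mapTS K lam (T : Set A) t * fbl K lam (T : Set A) i v hv *
              (mapTS K lam (T : Set A) t)⁻¹)⁻¹ *
            (mapTS K lam (T : Set A) u * fbl K lam (T : Set A) j w hw *
              (mapTS K lam (T : Set A) u)⁻¹)⁻¹ =
          (L.map fun p => p.1 * p.2 * p.1⁻¹).prod := by
  classical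
  -- Step 1: uniform area bound `c` for commutators of generators of `A`
  have hcomm_mem : ∀ s s' : ((T : Set A) : Set A), ∃ k, Area RA
      (FreeGroup.of s * FreeGroup.of s' * (FreeGroup.of s)⁻¹ * (FreeGroup.of s')⁻¹) k := by
    intro s s'
    apply exists_area_of_mem_normalClosure
    rw [← hpres, MonoidHom.mem_ker]
    have hab : ∀ a b : A, a * b * a⁻¹ * b⁻¹ = 1 := fun a b => by rw [mul_comm a b]; group
    simp [map_mul, map_inv, FreeGroup.lift_apply_of, hab]
  choose ck hck using hcomm_mem
  haveI : Fintype (((T : Set A) : Set A) : Type) := (T.finite_toSet).fintype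
  set c : ℕ := Finset.univ.sup
    (fun p : (((T : Set A) : Set A) × ((T : Set A) : Set A)) => ck p.1 p.2) with hc_def
  have hc : ∀ s s', Area RA
      (FreeGroup.of s * FreeGroup.of s' * (FreeGroup.of s)⁻¹ * (FreeGroup.of s')⁻¹) c :=
    fun s s' => area_mono (hck s s')
      (Finset.le_sup (f := fun p : (((T : Set A) : Set A) × ((T : Set A) : Set A)) => ck p.1 p.2)
        (Finset.mem_univ (s, s')))
  have hc4 : ∀ (s s' : ((T : Set A) : Set A)) (b b' : Bool), Area RA
      (FreeGroup.mk [(s, b)] * FreeGroup.mk [(s', b')] * (FreeGroup.mk [(s, b)])⁻¹ *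
        (FreeGroup.mk [(s', b')])⁻¹) c := by
    intro s s' b b'
    cases b <;> cases b' <;> simp only [mk_single_true, mk_single_false]
    · exact area_comm_inv_right (area_comm_inv_left (hc s s'))
    · exact area_comm_inv_left (hc s s')
    · exact area_comm_inv_right (hc s s')
    · exact hc s s'
  -- Step 2: constants
  set M : ℝ := 1 + ∑ i' : Fin m, ∑ s ∈ T, ‖((lam i' s : (K i')ˣ) : K i')‖ with hM_def
  have hM1 : (1 : ℝ) ≤ M := by
    have : (0:ℝ) ≤ ∑ i' : Fin m, ∑ s ∈ T, ‖((lam i' s : (K i')ˣ) : K i')‖ :=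
      Finset.sum_nonneg fun _ _ => Finset.sum_nonneg fun _ _ => norm_nonneg _
    simp only [hM_def]; linarith
  have hM : ∀ (i' : Fin m) (s : A), s ∈ T → ‖((lam i' s : (K i')ˣ) : K i')‖ ≤ M := by
    intro i' s hs
    have h1 : ‖((lam i' s : (K i')ˣ) : K i')‖ ≤ ∑ s' ∈ T, ‖((lam i' s' : (K i')ˣ) : K i')‖ :=
      Finset.single_le_sum (f := fun s' => ‖((lam i' s' : (K i')ˣ) : K i')‖)
        (fun _ _ => norm_nonneg _) hs
    have h2 : ∑ s' ∈ T, ‖((lam i' s' : (K i')ˣ) : K i')‖ ≤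
        ∑ i'' : Fin m, ∑ s' ∈ T, ‖((lam i'' s' : (K i'')ˣ) : K i'')‖ :=
      Finset.single_le_sum (f := fun i'' => ∑ s' ∈ T, ‖((lam i'' s' : (K i'')ˣ) : K i'')‖)
        (fun _ _ => Finset.sum_nonneg fun _ _ => norm_nonneg _) (Finset.mem_univ i')
    simp only [hM_def]; linarith
  choose t0 ht0 using hcontr
  set ρ : Fin m → Fin m → ℝ := fun i j =>
    max ‖((lam i (t0 i j) : (K i)ˣ) : K i)‖ ‖((lam j (t0 i j) : (K j)ˣ) : K j)‖ with hρ_def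
  have hρ0 : ∀ i j, 0 ≤ ρ i j := fun i j => le_trans (norm_nonneg _) (le_max_left _ _)
  have hρ1 : ∀ i j, ρ i j < 1 := fun i j => max_lt (ht0 i j).2.1 (ht0 i j).2.2
  have hE : ∀ i j : Fin m, ∃ Eij : ℕ, M * ρ i j ^ Eij ≤ 1 := by
    intro i j
    obtain ⟨Eij, hEij⟩ := exists_pow_lt_of_lt_one (x := M⁻¹) (by positivity) (hρ1 i j)
    refine ⟨Eij, ?_⟩
    have hMpos : (0:ℝ) < M := by linarith
    have := mul_lt_mul_of_pos_left hEij hMpos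
    rw [mul_inv_cancel₀ (ne_of_gt hMpos)] at this
    linarith
  choose E hEspec using hE
  refine ⟨((Finset.univ.sup (fun p : Fin m × Fin m =>
    8 * c * E p.1 p.2 + 4 * E p.1 p.2 + 5) : ℕ) : ℝ), ?_⟩
  intro n hn i j v w hv hw t u ht hu
  set R := SolCT.Rel K lam (T : Set A) RA with hR_def
  set N := E i j * n with hN_def
  set t0el : (((T : Set A) : Set A)) := ⟨t0 i j, (ht0 i j).1⟩ with ht0el_def
  set X := mapTS K lam (T : Set A) (FreeGroup.of t0el ^ N) with hX_def
  set D := 2 * (N * (c * n)) + (n + N) with hD_def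
  -- key: each side is area-equivalent to a conjugated single letter
  have key : ∀ (i' : Fin m) (v' : K i') (hv' : ‖v'‖ ≤ 1)
      (t' : FreeGroup ((T : Set A) : Set A)), len (T : Set A) t' ≤ n →
      ‖((lam i' (t0 i j) : (K i')ˣ) : K i')‖ ≤ ρ i j →
      ∃ (x : K i') (hx : ‖x‖ ≤ 1),
        AEq R (mapTS K lam (T : Set A) t' * fbl K lam (T : Set A) i' v' hv' *
          (mapTS K lam (T : Set A) t')⁻¹) (X⁻¹ * fbl K lam (T : Set A) i' x hx * X) D := by
    intro i' v' hv' t' hlen hρi'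
    letI : DecidableEq (((T : Set A) : Set A)) := Classical.decEq _
    set l1 := FreeGroup.toWord t' with hl1_def
    have hmk : FreeGroup.mk l1 = t' := FreeGroup.mk_toWord
    have hlen1 : l1.length ≤ n := by
      have he : len (T : Set A) t' = l1.length := rfl
      omega
    set rep : List ((((T : Set A) : Set A)) × Bool) := List.replicate N (t0el, true)
      with hrep_def
    set L1 : List ((((T : Set A) : Set A)) × Bool) := l1 ++ rep with hL1_def
    have hLiftRep : ∀ k : ℕ, FreeGroup.lift Subtype.val
        (FreeGroup.mk (List.replicate k (t0el, true))) = t0 i j ^ k := by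
      intro k; rw [mk_replicate, map_pow, FreeGroup.lift_apply_of]
    have hnormpow : ∀ k : ℕ, ‖((lam i' (t0 i j ^ k) : (K i')ˣ) : K i')‖ =
        ‖((lam i' (t0 i j) : (K i')ˣ) : K i')‖ ^ k := by
      intro k; rw [map_pow, Units.val_pow_eq_pow_val, norm_pow]
    have hρn1 : ‖((lam i' (t0 i j) : (K i')ˣ) : K i')‖ ≤ 1 :=
      le_of_lt (lt_of_le_of_lt hρi' (hρ1 i j))
    have hsuf : ∀ l', l' <:+ L1 →
        ‖((lam i' (FreeGroup.lift Subtype.val (FreeGroup.mk l')) : (K i')ˣ) : K i') * v'‖ ≤ 1 := by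
      intro l' hl'
      rcases List.suffix_or_suffix_of_suffix hl' (List.suffix_append l1 rep) with h | h
      · have hrepeq : l' = List.replicate l'.length (t0el, true) :=
          List.eq_replicate_of_mem (fun b hb => List.eq_of_mem_replicate (h.mem hb))
        rw [hrepeq, hLiftRep, norm_mul, hnormpow]
        have h1 : ‖((lam i' (t0 i j) : (K i')ˣ) : K i')‖ ^ l'.length ≤ 1 :=
          pow_le_one₀ (norm_nonneg _) hρn1
        nlinarith [norm_nonneg v', pow_nonneg (norm_nonneg
          ((lam i' (t0 i j) : (K i')ˣ) : K i')) l'.length]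
      · obtain ⟨p, hp⟩ := h
        obtain ⟨q, hq⟩ := hl'
        rw [← hp, ← List.append_assoc] at hq
        have hqp : q ++ p = l1 := (List.append_inj' hq rfl).1
        have hplen : p.length ≤ n := by
          have := congrArg List.length hqp
          simp only [List.length_append] at this
          omega
        rw [← hp, ← FreeGroup.mul_mk, map_mul, map_mul, Units.val_mul, hrep_def, hLiftRep]
        simp only [norm_mul, hnormpow]
        have b1 : ‖((lam i' (FreeGroup.lift Subtype.val (FreeGroup.mk p)) : (K i')ˣ) : K i')‖ ≤
            M ^ p.length :=
          norm_lam_mk_le K lam T i' hTsym M hM1 (fun s hs => hM i' s hs) p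
        have b2 : M ^ p.length ≤ M ^ n := pow_le_pow_right₀ hM1 hplen
        have b3 : ‖((lam i' (t0 i j) : (K i')ˣ) : K i')‖ ^ N ≤ ρ i j ^ N :=
          pow_le_pow_left₀ (norm_nonneg _) hρi' N
        have b4 : M ^ n * ρ i j ^ N ≤ 1 := by
          rw [hN_def, pow_mul, ← mul_pow]
          calc (M * ρ i j ^ E i j) ^ n ≤ 1 ^ n :=
                pow_le_pow_left₀ (by positivity) (hEspec i j) n
            _ = 1 := one_pow n
        have c1 : (0:ℝ) ≤ ‖((lam i' (FreeGroup.lift Subtype.val (FreeGroup.mk p)) : (K i')ˣ) :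
            K i')‖ := norm_nonneg _
        have c2 : (0:ℝ) ≤ ‖((lam i' (t0 i j) : (K i')ˣ) : K i')‖ ^ N := by positivity
        have c3 : (0:ℝ) ≤ ‖v'‖ := norm_nonneg _
        have c4 : (0:ℝ) ≤ M ^ n := by positivity
        have c5 : (0:ℝ) ≤ ρ i j ^ N := by positivity
        have c6 : (0:ℝ) ≤ M ^ p.length := by positivity
        nlinarith [mul_le_mul b1 b3 c2 c6, mul_le_mul b2 (le_refl (ρ i j ^ N)) c5 c4]
    have hpush := push_list K lam T RA i' L1 v' hv' (hsuf L1 (List.suffix_refl L1)) hsuf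
    have hmkL : FreeGroup.mk L1 = t' * FreeGroup.of t0el ^ N := by
      rw [hL1_def, ← FreeGroup.mul_mk, hmk, hrep_def, mk_replicate]
    have hsingle : ∀ (s : (((T : Set A) : Set A))) (b : Bool), Area RA
        (FreeGroup.mk [(s, b)] * FreeGroup.of t0el * (FreeGroup.mk [(s, b)])⁻¹ *
          (FreeGroup.of t0el)⁻¹) c := by
      intro s b
      have := hc4 s t0el b true
      rwa [mk_single_true] at this
    have hcl : Area RA (t' * FreeGroup.of t0el * t'⁻¹ * (FreeGroup.of t0el)⁻¹) (c * n) := by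
      have h := area_comm_mk hsingle l1
      rw [hmk] at h
      exact area_mono h (Nat.mul_le_mul_left c hlen1)
    have hpow := area_comm_pow (area_comm_swap hcl) N
    have htrans := area_mapTS K lam T RA hpow
    have haeq1 : AEq R (X * mapTS K lam (T : Set A) t') (mapTS K lam (T : Set A) t' * X)
        (N * (c * n)) := by
      have e : X * mapTS K lam (T : Set A) t' * (mapTS K lam (T : Set A) t' * X)⁻¹ =
          mapTS K lam (T : Set A)
            (FreeGroup.of t0el ^ N * t' * (FreeGroup.of t0el ^ N)⁻¹ * t'⁻¹) := by
        rw [map_mul, map_mul, map_mul, map_inv, map_inv, hX_def]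
        group
      show Area R _ _
      rw [e, hR_def]
      exact htrans
    set fv := fbl K lam (T : Set A) i' v' hv' with hfv_def
    set Tt := mapTS K lam (T : Set A) t' with hTt_def
    have haeq2 := aeq_conj_congr (aeq_refl (R := R) fv 0) haeq1
    have e3 : Tt * X = mapTS K lam (T : Set A) (FreeGroup.mk L1) := by
      rw [hmkL, map_mul, hTt_def, hX_def]
    have hlenL1 : L1.length ≤ n + N := by
      rw [hL1_def]
      simp only [List.length_append, hrep_def, List.length_replicate]
      omega
    have hpush' : AEq R (Tt * X * fv * (Tt * X)⁻¹)
        (fbl K lam (T : Set A) i'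
          (((lam i' (FreeGroup.lift Subtype.val (FreeGroup.mk L1)) : (K i')ˣ) : K i') * v')
          (hsuf L1 (List.suffix_refl L1))) (n + N) := by
      rw [e3]
      exact area_mono hpush hlenL1
    have htrans2 := aeq_trans haeq2 hpush'
    have hXa : AEq R (X * (Tt * fv * Tt⁻¹) * X⁻¹)
        (fbl K lam (T : Set A) i'
          (((lam i' (FreeGroup.lift Subtype.val (FreeGroup.mk L1)) : (K i')ˣ) : K i') * v')
          (hsuf L1 (List.suffix_refl L1))) D := by
      have e2 : X * (Tt * fv * Tt⁻¹) * X⁻¹ = (X * Tt) * fv * (X * Tt)⁻¹ := by group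
      rw [e2]
      exact area_mono htrans2 (by rw [hD_def]; omega)
    have hfin := aeq_conj (R := R) X⁻¹ hXa
    have e4 : X⁻¹ * (X * (Tt * fv * Tt⁻¹) * X⁻¹) * X⁻¹⁻¹ = Tt * fv * Tt⁻¹ := by group
    rw [e4, inv_inv] at hfin
    exact ⟨_, hsuf L1 (List.suffix_refl L1), hfin⟩
  obtain ⟨x, hx, ha⟩ := key i v hv t ht (le_max_left _ _)
  obtain ⟨y, hy, hb⟩ := key j w hw u hu (le_max_right _ _)
  have hcmm := aeq_comm_congr ha hb
  have hrel : fbl K lam (T : Set A) i x hx * fbl K lam (T : Set A) j y hy *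
      (fbl K lam (T : Set A) i x hx)⁻¹ * (fbl K lam (T : Set A) j y hy)⁻¹ ∈ R := by
    rw [hR_def]
    simp only [SolCT.Rel, Set.mem_union]
    exact Or.inl (Or.inr ⟨i, j, x, y, hx, hy, rfl⟩)
  have hA1 : Area R
      ((X⁻¹ * fbl K lam (T : Set A) i x hx * X) * (X⁻¹ * fbl K lam (T : Set A) j y hy * X) *
       (X⁻¹ * fbl K lam (T : Set A) i x hx * X)⁻¹ * (X⁻¹ * fbl K lam (T : Set A) j y hy * X)⁻¹)
      1 := by
    have e5 : (X⁻¹ * fbl K lam (T : Set A) i x hx * X) * (X⁻¹ * fbl K lam (T : Set A) j y hy * X) *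
       (X⁻¹ * fbl K lam (T : Set A) i x hx * X)⁻¹ * (X⁻¹ * fbl K lam (T : Set A) j y hy * X)⁻¹ =
        X⁻¹ * (fbl K lam (T : Set A) i x hx * fbl K lam (T : Set A) j y hy *
          (fbl K lam (T : Set A) i x hx)⁻¹ * (fbl K lam (T : Set A) j y hy)⁻¹) * X⁻¹⁻¹ := by
      group
    rw [e5]
    exact area_conj _ (area_of_mem hrel)
  have htot := area_of_aeq hcmm hA1
  have harith : 2 * D + 2 * D + 1 ≤
      Finset.univ.sup (fun p : Fin m × Fin m =>
        8 * c * E p.1 p.2 + 4 * E p.1 p.2 + 5) * n ^ 2 := by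
    have hle : 8 * c * E i j + 4 * E i j + 5 ≤ Finset.univ.sup (fun p : Fin m × Fin m =>
        8 * c * E p.1 p.2 + 4 * E p.1 p.2 + 5) :=
      Finset.le_sup (f := fun p : Fin m × Fin m => 8 * c * E p.1 p.2 + 4 * E p.1 p.2 + 5)
        (Finset.mem_univ (i, j))
    have h1 : 2 * D + 2 * D + 1 ≤ (8 * c * E i j + 4 * E i j + 5) * n ^ 2 := by
      rw [hD_def, hN_def]
      have hsq : n ^ 2 = n * n := sq n
      have hn2 : n ≤ n * n := Nat.le_mul_of_pos_left n hn
      have h1n : 1 ≤ n * n := by nlinarith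
      rw [hsq]
      nlinarith [Nat.mul_le_mul_left (E i j) hn2, hn2, h1n]
    calc 2 * D + 2 * D + 1 ≤ (8 * c * E i j + 4 * E i j + 5) * n ^ 2 := h1
      _ ≤ _ := Nat.mul_le_mul_right _ hle
  have hfinal := area_mono htot harith
  obtain ⟨Lst, h1, h2, h3⟩ := hfinal
  refine ⟨Lst, ?_, ?_, ?_⟩
  · have := (Nat.cast_le (α := ℝ)).2 h1
    push_cast at this
    convert this using 2
  · exact h2
  · exact h3
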